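/- arXiv:1603.01196 — 2 statements merged into one kernel-verified Lean document; each statement's English description precedes it below -/
import Mathlib

section
/- Let σ > 0 and let ρ(x) = √(4σ² − x²)/(2πσ²) be the semicircle density on [−2σ, 2σ]. Then for every real z with z > 2σ, the Stieltjes transform satisfies ∫_{−2σ}^{2σ} ρ(x)/(z − x) dx = (z − √(z² − 4σ²))/(2σ²). -/
open Real intervalIntegral

lemma semicircle_deriv (a z : ℝ) (ha : 0 < a) (hz : a < z) (x : ℝ)
    (hx : x ∈ Set.Ioo (-a) a) :
    HasDerivAt (fun x : ℝ => z * Real.arcsin (x / a) - Real.sqrt (a ^ 2 - x ^ 2)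
      + Real.sqrt (z ^ 2 - a ^ 2) * Real.arcsin ((a ^ 2 - z * x) / (a * (z - x))))
      (Real.sqrt (a ^ 2 - x ^ 2) / (z - x)) x := by
  obtain ⟨hx1, hx2⟩ := hx
  have hzx : 0 < z - x := by linarith
  have hq2 : 0 < a ^ 2 - x ^ 2 := by nlinarith
  have hs2 : 0 < z ^ 2 - a ^ 2 := by nlinarith
  set q := Real.sqrt (a ^ 2 - x ^ 2) with hq
  set s := Real.sqrt (z ^ 2 - a ^ 2) with hs
  have hqpos : 0 < q := Real.sqrt_pos.2 hq2
  have hspos : 0 < s := Real.sqrt_pos.2 hs2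
  have hqsq : q ^ 2 = a ^ 2 - x ^ 2 := Real.sq_sqrt hq2.le
  have hssq : s ^ 2 = z ^ 2 - a ^ 2 := Real.sq_sqrt hs2.le
  have hane : a ≠ 0 := ha.ne'
  -- Part 1 : z * arcsin (x / a)
  have h1 : HasDerivAt (fun x : ℝ => z * Real.arcsin (x / a)) (z / q) x := by
    have hne1 : x / a ≠ -1 := by
      intro h
      have : x = -a := by field_simp at h; linarith
      exact absurd this (by linarith)
    have hne2 : x / a ≠ 1 := by
      intro h
      have : x = a := by field_simp at h; linarith
      exact absurd this (by linarith)
    have hin : HasDerivAt (fun x : ℝ => x / a) (1 / a) x := by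
      simpa using (hasDerivAt_id x).div_const a
    have := (Real.hasDerivAt_arcsin hne1 hne2).comp x hin
    have hrw : Real.sqrt (1 - (x / a) ^ 2) = q / a := by
      rw [show 1 - (x / a) ^ 2 = (q / a) ^ 2 by
        rw [div_pow, div_pow, hqsq]; field_simp]
      exact Real.sqrt_sq (by positivity)
    have h' := this.const_mul z
    refine h'.congr_deriv ?_; symm
    rw [hrw]
    field_simp
  -- Part 2 : sqrt (a^2 - x^2)
  have h2 : HasDerivAt (fun x : ℝ => Real.sqrt (a ^ 2 - x ^ 2)) (-x / q) x := by
    have hin : HasDerivAt (fun x : ℝ => a ^ 2 - x ^ 2) (-(2 * x)) x := by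
      simpa using (hasDerivAt_pow 2 x).const_sub (a ^ 2)
    have := hin.sqrt (ne_of_gt hq2)
    convert this using 1
    rw [← hq]
    field_simp
  -- Part 3 : s * arcsin ((a^2 - z*x)/(a*(z-x)))
  have h3 : HasDerivAt (fun x : ℝ =>
      s * Real.arcsin ((a ^ 2 - z * x) / (a * (z - x))))
      (-(s ^ 2) / ((z - x) * q)) x := by
    set g : ℝ → ℝ := fun x => (a ^ 2 - z * x) / (a * (z - x)) with hgdef
    have hden : a * (z - x) ≠ 0 := by positivity
    have hone : 1 - g x ^ 2 = (q * s / (a * (z - x))) ^ 2 := by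
      have hq2s2 : (q * s / (a * (z - x))) ^ 2
          = (a ^ 2 - x ^ 2) * (z ^ 2 - a ^ 2) / (a * (z - x)) ^ 2 := by
        rw [div_pow, mul_pow, hqsq, hssq]
      rw [hq2s2]
      simp only [hgdef]
      field_simp
      ring
    have honepos : 0 < 1 - g x ^ 2 := by
      rw [hone]; positivity
    have hgne1 : g x ≠ -1 := by intro h; rw [h] at honepos; norm_num at honepos
    have hgne2 : g x ≠ 1 := by intro h; rw [h] at honepos; norm_num at honepos
    have hgd : HasDerivAt g ((a ^ 2 - z ^ 2) / (a * (z - x) ^ 2)) x := by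
      have hnum : HasDerivAt (fun x : ℝ => a ^ 2 - z * x) (-z) x := by
        simpa using ((hasDerivAt_id x).const_mul z).const_sub (a ^ 2)
      have hden' : HasDerivAt (fun x : ℝ => a * (z - x)) (a * (-1)) x := by
        exact (((hasDerivAt_id x).const_sub z)).const_mul a
      have := hnum.div hden' hden
      refine this.congr_deriv ?_; symm
      field_simp
      ring
    have := ((Real.hasDerivAt_arcsin hgne1 hgne2).comp x hgd).const_mul s
    refine this.congr_deriv ?_; symm
    have hrw : Real.sqrt (1 - g x ^ 2) = q * s / (a * (z - x)) := by
      rw [hone]; exact Real.sqrt_sq (by positivity)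
    rw [hrw, show a ^ 2 - z ^ 2 = -s ^ 2 by rw [hssq]; ring]
    field_simp
  have := (h1.sub h2).add h3
  refine this.congr_deriv ?_; symm
  have hstep : z / q - -x / q + -s ^ 2 / ((z - x) * q)
      = ((z + x) * (z - x) - s ^ 2) / ((z - x) * q) := by
    field_simp
    ring
  rw [hstep, hssq, show (z + x) * (z - x) - (z ^ 2 - a ^ 2) = q ^ 2 by rw [hqsq]; ring,
    pow_two, mul_comm (z - x) q, mul_div_mul_left _ _ hqpos.ne']

lemma semicircle_integral (a z : ℝ) (ha : 0 < a) (hz : a < z) :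
    ∫ x in (-a)..a, Real.sqrt (a ^ 2 - x ^ 2) / (z - x)
      = π * (z - Real.sqrt (z ^ 2 - a ^ 2)) := by
  set s := Real.sqrt (z ^ 2 - a ^ 2) with hs
  set F : ℝ → ℝ := fun x => z * Real.arcsin (x / a) - Real.sqrt (a ^ 2 - x ^ 2)
      + s * Real.arcsin ((a ^ 2 - z * x) / (a * (z - x))) with hF
  have hane : a ≠ 0 := ha.ne'
  have hcont : ContinuousOn F (Set.Icc (-a) a) := by
    have hden : ∀ x ∈ Set.Icc (-a) a, a * (z - x) ≠ 0 := by
      intro x hx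
      have : 0 < z - x := by linarith [hx.2]
      exact (mul_pos ha this).ne'
    apply ContinuousOn.add
    · apply ContinuousOn.sub
      · exact continuousOn_const.mul
          (Real.continuous_arcsin.comp (continuous_id.div_const a)).continuousOn
      · exact (Real.continuous_sqrt.comp (by continuity)).continuousOn
    · exact continuousOn_const.mul (Real.continuous_arcsin.comp_continuousOn
        (ContinuousOn.div (by fun_prop) (by fun_prop) hden))
  have hint : IntervalIntegrable (fun x => Real.sqrt (a ^ 2 - x ^ 2) / (z - x))
      MeasureTheory.volume (-a) a := by
    apply ContinuousOn.intervalIntegrable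
    rw [Set.uIcc_of_le (by linarith)]
    apply ContinuousOn.div
    · exact (Real.continuous_sqrt.comp (by continuity)).continuousOn
    · fun_prop
    · intro x hx
      have : 0 < z - x := by linarith [hx.2]
      exact this.ne'
  have key := intervalIntegral.integral_eq_sub_of_hasDerivAt_of_le (by linarith : -a ≤ a)
    hcont (fun x hx => semicircle_deriv a z ha hz x hx) hint
  rw [key]
  have e1 : a / a = 1 := div_self hane
  have e2 : -a / a = -1 := by field_simp
  have hza : 0 < z - a := by linarith
  have hzna : 0 < z - -a := by linarith
  have e3 : (a ^ 2 - z * a) / (a * (z - a)) = -1 := by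
    rw [div_eq_iff (mul_pos ha hza).ne']; ring
  have e4 : (a ^ 2 - z * -a) / (a * (z - -a)) = 1 := by
    rw [div_eq_iff (mul_pos ha hzna).ne']; ring
  simp only [hF, e1, e2, e3, e4, Real.arcsin_one, Real.arcsin_neg_one]
  rw [show a ^ 2 - a ^ 2 = 0 by ring, show a ^ 2 - (-a) ^ 2 = 0 by ring,
    Real.sqrt_zero]
  ring

/-- Stieltjes transform of the semicircle density of variance `σ²`,
evaluated at real `z > 2σ`. -/
theorem semicircle_stieltjes_transform (σ : ℝ) (hσ : 0 < σ) (z : ℝ) (hz : 2 * σ < z) :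
    ∫ x in (-(2 * σ))..(2 * σ), (Real.sqrt (4 * σ ^ 2 - x ^ 2) / (2 * π * σ ^ 2)) / (z - x)
      = (z - Real.sqrt (z ^ 2 - 4 * σ ^ 2)) / (2 * σ ^ 2) := by
  have ha : (0:ℝ) < 2 * σ := by linarith
  have h4 : ∀ x : ℝ, 4 * σ ^ 2 - x ^ 2 = (2 * σ) ^ 2 - x ^ 2 := by intro x; ring
  have hz2 : z ^ 2 - 4 * σ ^ 2 = z ^ 2 - (2 * σ) ^ 2 := by ring
  have := semicircle_integral (2 * σ) z ha hz
  have heq : ∀ x : ℝ, (Real.sqrt (4 * σ ^ 2 - x ^ 2) / (2 * π * σ ^ 2)) / (z - x)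
      = (1 / (2 * π * σ ^ 2)) * (Real.sqrt ((2 * σ) ^ 2 - x ^ 2) / (z - x)) := by
    intro x; rw [h4]; ring
  simp only [heq]
  rw [intervalIntegral.integral_const_mul, this, hz2]
  have hπ : π ≠ 0 := Real.pi_ne_zero
  field_simp
end

section
/- Let Z be a standard real Gaussian random variable (mean 0, variance 1). Then for every natural number n and every real x, the complex expectation E[(x + iZ)ⁿ] equals He_n(x), the n-th probabilist's Hermite polynomial evaluated at x. -/
open ProbabilityTheory MeasureTheory Polynomial Complex Real
open scoped NNReal ENNReal

noncomputable def gaussFn (z : ℝ) : ℂ := (Real.exp (-z^2/2) : ℂ)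

lemma continuous_gaussFn : Continuous gaussFn :=
  Complex.continuous_ofReal.comp (Real.continuous_exp.comp ((continuous_pow 2).neg.div_const 2))

lemma integrable_aeval_gauss (P : Polynomial ℂ) :
    Integrable fun z : ℝ => Polynomial.aeval (z : ℂ) P * gaussFn z := by
  induction P using Polynomial.induction_on' with
  | add p q hp hq => simpa [add_mul] using hp.fun_add hq
  | monomial k a =>
    have h0 : Integrable fun z : ℝ => z ^ (k:ℝ) * Real.exp (-(1/2:ℝ) * z^2) :=
      integrable_rpow_mul_exp_neg_mul_sq (b := 1/2) (by norm_num) (s := (k:ℝ))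
        (by linarith [Nat.cast_nonneg (α := ℝ) k])
    have h1 : Integrable fun z : ℝ => |z| ^ k * Real.exp (-(1/2:ℝ) * z^2) := by
      simpa [Real.rpow_natCast, abs_mul, abs_pow,
        _root_.abs_of_nonneg (Real.exp_pos _).le] using h0.abs
    refine (h1.const_mul ‖a‖).mono' ?_ ?_
    · exact (((Polynomial.continuous_aeval _).comp Complex.continuous_ofReal).mul
        continuous_gaussFn).aestronglyMeasurable
    · refine Filter.Eventually.of_forall fun z => le_of_eq ?_
      rw [show (-(1/2:ℝ) * z^2) = -z^2/2 by ring]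
      simp [aeval_monomial, gaussFn, norm_mul, norm_pow, Complex.norm_real,
        Real.norm_eq_abs, _root_.abs_of_nonneg (Real.exp_pos _).le, mul_assoc,
        Complex.norm_exp]
      left; left
      simp [← Complex.ofReal_pow]

lemma intk (x : ℝ) (k : ℕ) :
    Integrable fun z : ℝ => ((x:ℂ) + Complex.I * z)^k * gaussFn z := by
  refine (integrable_aeval_gauss ((C (x:ℂ) + C Complex.I * X)^k)).congr
    (Filter.Eventually.of_forall fun z => ?_)
  simp [map_pow]

lemma intzk (x : ℝ) (k : ℕ) :
    Integrable fun z : ℝ => (z:ℂ) * (((x:ℂ) + Complex.I * z)^k * gaussFn z) := by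
  refine (integrable_aeval_gauss (X * (C (x:ℂ) + C Complex.I * X)^k)).congr
    (Filter.Eventually.of_forall fun z => ?_)
  simp [map_pow, mul_assoc]

lemma stein (x : ℝ) (k : ℕ) :
    ∫ z : ℝ, (z:ℂ) * (((x:ℂ) + Complex.I * z)^k * gaussFn z)
      = k * Complex.I * ∫ z : ℝ, ((x:ℂ) + Complex.I * z)^(k-1) * gaussFn z := by
  have hu : ∀ z : ℝ, HasDerivAt (fun z : ℝ => ((x:ℂ) + Complex.I * (z:ℂ))^k)
      ((k:ℂ) * ((x:ℂ) + Complex.I * z)^(k-1) * Complex.I) z := by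
    intro z
    have h1 : HasDerivAt (fun w : ℂ => ((x:ℂ) + Complex.I * w)^k)
        ((k:ℂ) * ((x:ℂ) + Complex.I * z)^(k-1) * Complex.I) (z:ℂ) := by
      have h0 : HasDerivAt (fun w : ℂ => (x:ℂ) + Complex.I * w) Complex.I (z:ℂ) := by
        simpa using ((hasDerivAt_id (z:ℂ)).const_mul Complex.I).const_add (x:ℂ)
      simpa using h0.fun_pow k
    exact h1.comp_ofReal
  have hv : ∀ z : ℝ, HasDerivAt gaussFn ((Real.exp (-z^2/2) * (-z) : ℝ) : ℂ) z := by
    intro z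
    have h0 : HasDerivAt (fun z : ℝ => -z^2/2) (-z) z := by
      exact ((hasDerivAt_pow 2 z).fun_neg.div_const 2).congr_deriv (by ring)
    exact (h0.exp).ofReal_comp
  have huv' : Integrable ((fun z : ℝ => ((x:ℂ) + Complex.I * (z:ℂ))^k) *
      (fun z : ℝ => ((Real.exp (-z^2/2) * (-z) : ℝ) : ℂ))) := by
    refine (intzk x k).neg.congr (Filter.Eventually.of_forall fun z => ?_)
    show -((z:ℂ) * (((x:ℂ) + Complex.I * z)^k * gaussFn z))
      = ((x:ℂ) + Complex.I * z)^k * ((Real.exp (-z^2/2) * (-z) : ℝ) : ℂ)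
    push_cast [gaussFn]; ring
  have hu'v : Integrable ((fun z : ℝ => (k:ℂ) * ((x:ℂ) + Complex.I * (z:ℂ))^(k-1) * Complex.I) *
      gaussFn) := by
    refine ((intk x (k-1)).const_mul ((k:ℂ) * Complex.I)).congr
      (Filter.Eventually.of_forall fun z => ?_)
    show (k:ℂ) * Complex.I * (((x:ℂ) + Complex.I * z)^(k-1) * gaussFn z)
      = ((k:ℂ) * ((x:ℂ) + Complex.I * z)^(k-1) * Complex.I) * gaussFn z
    ring
  have huv : Integrable ((fun z : ℝ => ((x:ℂ) + Complex.I * (z:ℂ))^k) * gaussFn) := intk x k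
  have key := integral_mul_deriv_eq_deriv_mul_of_integrable (fun z _ => hu z) (fun z _ => hv z) huv' hu'v huv
  have l1 : (∫ z : ℝ, ((x:ℂ) + Complex.I * z)^k * ((Real.exp (-z^2/2) * (-z) : ℝ) : ℂ))
      = - ∫ z : ℝ, (z:ℂ) * (((x:ℂ) + Complex.I * z)^k * gaussFn z) := by
    rw [← integral_neg]
    congr 1; funext z; push_cast [gaussFn]; ring
  have l2 : (∫ z : ℝ, (k:ℂ) * ((x:ℂ) + Complex.I * z)^(k-1) * Complex.I * gaussFn z)
      = k * Complex.I * ∫ z : ℝ, ((x:ℂ) + Complex.I * z)^(k-1) * gaussFn z := by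
    rw [← integral_const_mul]
    congr 1; funext z; ring
  rw [l1, l2] at key
  exact neg_inj.mp key

lemma gk_succ (x : ℝ) (k : ℕ) :
    ∫ z : ℝ, ((x:ℂ) + Complex.I * z)^(k+1) * gaussFn z
      = (x:ℂ) * (∫ z : ℝ, ((x:ℂ) + Complex.I * z)^k * gaussFn z)
        + Complex.I * ∫ z : ℝ, (z:ℂ) * (((x:ℂ) + Complex.I * z)^k * gaussFn z) := by
  rw [← integral_const_mul, ← integral_const_mul,
    ← integral_add ((intk x k).const_mul _) ((intzk x k).const_mul _)]
  congr 1; funext z; ring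

lemma gk_zero (x : ℝ) :
    ∫ z : ℝ, ((x:ℂ) + Complex.I * z)^(0:ℕ) * gaussFn z = (Real.sqrt (2*Real.pi) : ℂ) := by
  have h : ∫ z : ℝ, Real.exp (-z^2/2) = Real.sqrt (2*Real.pi) := by
    have h2 := integral_gaussian (1/2)
    simp_rw [show ∀ z : ℝ, -(1/2:ℝ) * z^2 = -z^2/2 from fun z => by ring] at h2
    rw [h2]
    congr 1
    ring
  calc ∫ z : ℝ, ((x:ℂ) + Complex.I * z)^(0:ℕ) * gaussFn z
      = ∫ z : ℝ, ((Real.exp (-z^2/2) : ℝ) : ℂ) := by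
        congr 1; funext z; simp [gaussFn]
    _ = ((∫ z : ℝ, Real.exp (-z^2/2) : ℝ) : ℂ) := integral_ofReal
    _ = (Real.sqrt (2*Real.pi) : ℂ) := by rw [h]

lemma hermite_deriv (n : ℕ) :
    derivative (hermite (n+1)) = C ((n:ℤ)+1) * hermite n := by
  induction n with
  | zero => simp [hermite_one, hermite_zero]
  | succ n ih =>
    have hs : derivative (hermite n) = X * hermite n - hermite (n+1) := by
      rw [hermite_succ n]; ring
    rw [show n+1+1 = (n+1)+1 from rfl, hermite_succ (n+1), derivative_sub, derivative_mul,
      derivative_X, one_mul, ih, derivative_mul, derivative_C, zero_mul, zero_add, hs]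
    push_cast
    rw [show Polynomial.C ((n:ℤ)+1+1) = Polynomial.C ((n:ℤ)+1) + Polynomial.C 1 from map_add _ _ _,
      Polynomial.C_1]
    ring

lemma hermite_rec (x : ℝ) (n : ℕ) :
    (Polynomial.aeval (x:ℂ) (hermite (n+2)) : ℂ)
      = (x:ℂ) * Polynomial.aeval (x:ℂ) (hermite (n+1))
        - ((n:ℂ)+1) * Polynomial.aeval (x:ℂ) (hermite n) := by
  rw [hermite_succ (n+1), hermite_deriv n, map_sub, map_mul, map_mul, aeval_X, aeval_C]
  simp only [eq_intCast]
  push_cast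
  ring

lemma gk_eq (x : ℝ) (n : ℕ) :
    ∫ z : ℝ, ((x:ℂ) + Complex.I * z)^n * gaussFn z
      = (Real.sqrt (2*Real.pi) : ℂ) * Polynomial.aeval (x:ℂ) (hermite n) := by
  induction n using Nat.twoStepInduction with
  | zero => rw [gk_zero x]; simp [hermite_zero]
  | one =>
    have h := gk_succ x 0
    rw [stein x 0] at h
    simp only [Nat.cast_zero, zero_mul, mul_zero, add_zero] at h
    rw [h, gk_zero x]
    simp [hermite_one]
    ring
  | more n ih1 ih2 =>
    have h := gk_succ x (n+1)
    rw [stein x (n+1)] at h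
    simp only [Nat.add_sub_cancel] at h
    rw [h, ih1, ih2, hermite_rec x n]
    push_cast
    ring_nf
    simp only [Complex.I_sq]
    ring_nf

/-- For a standard Gaussian `Z`, `E[(x + iZ)ⁿ] = Heₙ(x)`, the `n`-th probabilist's
Hermite polynomial. -/
theorem gaussian_expectation_hermite (n : ℕ) (x : ℝ) :
    ∫ z : ℝ, ((x : ℂ) + Complex.I * (z : ℂ)) ^ n ∂(gaussianReal 0 1)
      = Polynomial.aeval (x : ℂ) (Polynomial.hermite n) := by
  rw [gaussianReal_of_var_ne_zero 0 one_ne_zero]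
  rw [show gaussianPDF 0 1 = fun z => ((Real.toNNReal (gaussianPDFReal 0 1 z) : ℝ≥0) : ℝ≥0∞)
    from rfl]
  rw [integral_withDensity_eq_integral_smul
    ((measurable_gaussianPDFReal 0 1).real_toNNReal) _]
  have hpt : ∀ z : ℝ, (Real.toNNReal (gaussianPDFReal 0 1 z)) • ((x:ℂ) + Complex.I * z)^n
      = (((Real.sqrt (2*Real.pi))⁻¹ : ℝ) : ℂ) * (((x:ℂ) + Complex.I * z)^n * gaussFn z) := by
    intro z
    rw [NNReal.smul_def, Real.coe_toNNReal _ (gaussianPDFReal_nonneg _ _ _)]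
    rw [gaussianPDFReal]
    simp only [NNReal.coe_one, mul_one, sub_zero]
    rw [Complex.real_smul, gaussFn]
    push_cast
    ring
  simp_rw [hpt]
  rw [integral_const_mul, gk_eq x n, ← mul_assoc, ← Complex.ofReal_mul,
    inv_mul_cancel₀ (ne_of_gt (Real.sqrt_pos.mpr (by positivity))), Complex.ofReal_one, one_mul]
end
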